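/- If Δ ⊂ ℝ² is a 2-dimensional lattice polytope, then the Fine interior Δ^{FI} equals the convex hull of the interior lattice points of Δ. In particular, if Δ has no interior lattice points, then Δ^{FI} is empty. -/

import Mathlib

open Finset Pointwise MeasureTheory
noncomputable section

variable {d : ℕ}

/-- Standard pairing on ℝ^d. -/
def pairR (x y : Fin d → ℝ) : ℝ := ∑ i, x i * y i

/-- Embedding of ℤ^d into ℝ^d. -/
def toR (n : Fin d → ℤ) : Fin d → ℝ := fun i => (n i : ℝ)

/-- A point of ℝ^d with integer coordinates. -/
def IsLatticePoint (x : Fin d → ℝ) : Prop := ∀ i, ∃ z : ℤ, x i = (z : ℝ)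

/-- ord_Δ(y) = min_{x ∈ Δ} ⟨x, y⟩. -/
def ordP (Δ : Set (Fin d → ℝ)) (y : Fin d → ℝ) : ℝ := sInf ((fun x => pairR x y) '' Δ)

/-- The Fine interior of Δ. -/
def fineInterior (Δ : Set (Fin d → ℝ)) : Set (Fin d → ℝ) :=
  {x | ∀ n : Fin d → ℤ, n ≠ 0 → ordP Δ (toR n) + 1 ≤ pairR x (toR n)}

/-- A lattice polytope: the convex hull of finitely many lattice points. -/
def IsLatticePolytope (Δ : Set (Fin d → ℝ)) : Prop :=
  ∃ S : Finset (Fin d → ℤ), Δ = convexHull ℝ (toR '' (S : Set (Fin d → ℤ)))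

/-- The polar set Δ* = {y : ⟨x,y⟩ ≥ -1 for all x ∈ Δ}. -/
def polarSet (Δ : Set (Fin d → ℝ)) : Set (Fin d → ℝ) :=
  {y | ∀ x ∈ Δ, -1 ≤ pairR x y}

/-- [P] = convex hull of the lattice points of P. -/
def latticeHull (P : Set (Fin d → ℝ)) : Set (Fin d → ℝ) :=
  convexHull ℝ {x ∈ P | IsLatticePoint x}

/-- Pseudoreflexive polytope: Fine interior {0} and Δ = [[Δ*]*]. -/
def IsPseudoreflexive (Δ : Set (Fin d → ℝ)) : Prop :=
  IsLatticePolytope Δ ∧ fineInterior Δ = {0} ∧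
    Δ = latticeHull (polarSet (latticeHull (polarSet Δ)))

/-- (Exposed) face of Δ cut out by a supporting linear functional. -/
def IsFaceOf (Δ F : Set (Fin d → ℝ)) : Prop :=
  ∃ y : Fin d → ℝ, F = {x ∈ Δ | pairR x y = ordP Δ y}

/-- Dimension of a subset of ℝ^d. -/
def dimSet (S : Set (Fin d → ℝ)) : ℕ := Module.finrank ℝ ↥(vectorSpan ℝ S)

/-- The face of the polar polytope dual to a face F of Δ. -/
def dualFace (Δ F : Set (Fin d → ℝ)) : Set (Fin d → ℝ) :=
  {y ∈ polarSet Δ | ∀ x ∈ F, pairR x y = -1}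

/-- The cone ℝ_{≥0}·Θ over a set Θ. -/
def coneOver (Θ : Set (Fin d → ℝ)) : Set (Fin d → ℝ) :=
  {x | ∃ c : ℝ, 0 ≤ c ∧ ∃ p ∈ Θ, x = c • p}

/-- A face Θ is ordinary if every lattice point of ℝ_{≥0}Θ lies in some dilate lΘ. -/
def IsOrdinaryFace (Θ : Set (Fin d → ℝ)) : Prop :=
  ∀ n : Fin d → ℤ, toR n ∈ coneOver Θ → ∃ l : ℕ, toR n ∈ (l : ℝ) • Θ

/-- Facet: a face of dimension d-1. -/
def IsFacet (Δ Θ : Set (Fin d → ℝ)) : Prop :=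
  IsFaceOf Δ Θ ∧ dimSet Θ + 1 = d
namespace Stmt3Aux

abbrev V2 := Fin 2 → ℝ
abbrev Z2 := Fin 2 → ℤ

lemma pairR_expand (x y : V2) : pairR x y = x 0 * y 0 + x 1 * y 1 := by
  simp [pairR, Fin.sum_univ_two]

lemma toR_apply (n : Z2) (i : Fin 2) : toR n i = (n i : ℝ) := rfl

lemma toR_eq_zero_iff {n : Z2} : toR n = 0 ↔ n = 0 := by
  constructor
  · intro h; funext i
    have := congrFun h i
    simpa [toR] using this
  · rintro rfl; funext i; simp [toR]

lemma toR_inj {a b : Z2} (h : toR a = toR b) : a = b := by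
  funext i
  have := congrFun h i
  simpa [toR] using this

lemma pairR_int (a n : Z2) : pairR (toR a) (toR n) = ((a 0 * n 0 + a 1 * n 1 : ℤ) : ℝ) := by
  rw [pairR_expand]; push_cast [toR]; ring

lemma continuous_pairR_left (y : V2) : Continuous fun x : V2 => pairR x y := by
  have : (fun x : V2 => pairR x y) = fun x => x 0 * y 0 + x 1 * y 1 := by
    funext x; exact pairR_expand x y
  rw [this]
  exact ((continuous_apply 0).mul continuous_const).add ((continuous_apply 1).mul continuous_const)

/-- pairR as a linear map in the first variable. -/
def pairL (y : V2) : V2 →ₗ[ℝ] ℝ where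
  toFun x := pairR x y
  map_add' a b := by simp [pairR_expand]; ring
  map_smul' c a := by simp [pairR_expand]; ring

lemma pairL_apply (y : V2) (x : V2) : pairL y x = pairR x y := rfl

section OrdMin

variable {S : Finset Z2}

/-- The minimum of the pairing over the generating set. -/
lemma ord_eq_min (hS : S.Nonempty) (y : V2) :
    ordP (convexHull ℝ (toR '' (S : Set Z2))) y
      = (S.image fun s => pairR (toR s) y).min' (hS.image (fun s => pairR (toR s) y)) := by
  classical
  set m := (S.image fun s => pairR (toR s) y).min' (hS.image (fun s => pairR (toR s) y)) with hm
  have himg : (fun x => pairR x y) '' (convexHull ℝ (toR '' (S : Set Z2)))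
      = convexHull ℝ ((fun x => pairR x y) '' (toR '' (S : Set Z2))) := by
    have := (pairL y).image_convexHull (toR '' (S : Set Z2))
    exact this
  have hTsub : (fun x => pairR x y) '' (toR '' (S : Set Z2)) ⊆ Set.Ici m := by
    rintro - ⟨-, ⟨s, hs, rfl⟩, rfl⟩
    exact Finset.min'_le (S.image fun s => pairR (toR s) y) (pairR (toR s) y) (Finset.mem_image_of_mem (fun s => pairR (toR s) y) hs)
  have hsub : convexHull ℝ ((fun x => pairR x y) '' (toR '' (S : Set Z2))) ⊆ Set.Ici m :=
    convexHull_min hTsub (convex_Ici m)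
  have hmem : m ∈ convexHull ℝ ((fun x => pairR x y) '' (toR '' (S : Set Z2))) := by
    apply subset_convexHull
    obtain ⟨s, hs, hsm⟩ := Finset.mem_image.mp ((S.image fun s => pairR (toR s) y).min'_mem (hS.image (fun s => pairR (toR s) y)))
    exact ⟨toR s, ⟨s, hs, rfl⟩, hsm⟩
  rw [ordP, himg]
  apply le_antisymm
  · exact csInf_le ⟨m, fun z hz => hsub hz⟩ hmem
  · exact le_csInf ⟨m, hmem⟩ fun z hz => hsub hz

/-- ord is attained at some generator. -/
lemma ord_attained (hS : S.Nonempty) (y : V2) :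
    ∃ s ∈ S, ordP (convexHull ℝ (toR '' (S : Set Z2))) y = pairR (toR s) y := by
  classical
  obtain ⟨s, hs, hsm⟩ := Finset.mem_image.mp ((S.image fun s => pairR (toR s) y).min'_mem (hS.image (fun s => pairR (toR s) y)))
  exact ⟨s, hs, by rw [ord_eq_min hS]; exact hsm.symm⟩

/-- ord is a lower bound on the generators. -/
lemma ord_le_gen (hS : S.Nonempty) (y : V2) {s : Z2} (hs : s ∈ S) :
    ordP (convexHull ℝ (toR '' (S : Set Z2))) y ≤ pairR (toR s) y := by
  rw [ord_eq_min hS]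
  exact Finset.min'_le (S.image fun s => pairR (toR s) y) (pairR (toR s) y) (Finset.mem_image_of_mem (fun s => pairR (toR s) y) hs)

/-- ord is a lower bound on the whole hull. -/
lemma ord_le (hS : S.Nonempty) (y : V2) {x : V2} (hx : x ∈ convexHull ℝ (toR '' (S : Set Z2))) :
    ordP (convexHull ℝ (toR '' (S : Set Z2))) y ≤ pairR x y := by
  classical
  set m := (S.image fun s => pairR (toR s) y).min' (hS.image (fun s => pairR (toR s) y)) with hm
  have hTsub : toR '' (S : Set Z2) ⊆ {z | m ≤ pairR z y} := by
    rintro - ⟨s, hs, rfl⟩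
    exact Finset.min'_le (S.image fun s => pairR (toR s) y) (pairR (toR s) y) (Finset.mem_image_of_mem (fun s => pairR (toR s) y) hs)
  have hconv : Convex ℝ {z : V2 | m ≤ pairR z y} := by
    intro p hp q hq a b ha hb hab
    simp only [Set.mem_setOf_eq] at *
    have : pairR (a • p + b • q) y = a * pairR p y + b * pairR q y := by
      simp [pairR_expand]; ring
    rw [this]
    calc m = a * m + b * m := by rw [← add_mul, hab, one_mul]
    _ ≤ a * pairR p y + b * pairR q y :=
      add_le_add (mul_le_mul_of_nonneg_left hp ha) (mul_le_mul_of_nonneg_left hq hb)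
  have := convexHull_min hTsub hconv hx
  rw [ord_eq_min hS]
  exact this

/-- ord of an integer direction is an integer. -/
lemma ord_int (hS : S.Nonempty) (n : Z2) :
    ∃ k : ℤ, ordP (convexHull ℝ (toR '' (S : Set Z2))) (toR n) = (k : ℝ) := by
  obtain ⟨s, _, hs⟩ := ord_attained hS (toR n)
  exact ⟨s 0 * n 0 + s 1 * n 1, by rw [hs, pairR_int]⟩

/-- ord is superadditive in the direction. -/
lemma ord_superadd (hS : S.Nonempty) (y₁ y₂ : V2) :
    ordP (convexHull ℝ (toR '' (S : Set Z2))) y₁ + ordP (convexHull ℝ (toR '' (S : Set Z2))) y₂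
      ≤ ordP (convexHull ℝ (toR '' (S : Set Z2))) (y₁ + y₂) := by
  obtain ⟨s, hs, hkey⟩ := ord_attained hS (y₁ + y₂)
  have h1 := ord_le_gen hS y₁ hs
  have h2 := ord_le_gen hS y₂ hs
  have : pairR (toR s) (y₁ + y₂) = pairR (toR s) y₁ + pairR (toR s) y₂ := by
    simp [pairR_expand]; ring
  rw [hkey, this]
  exact add_le_add h1 h2

/-- ord is positively homogeneous. -/
lemma ord_smul (hS : S.Nonempty) {c : ℝ} (hc : 0 ≤ c) (y : V2) :
    ordP (convexHull ℝ (toR '' (S : Set Z2))) (c • y)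
      = c * ordP (convexHull ℝ (toR '' (S : Set Z2))) y := by
  have key : ∀ x : V2, pairR x (c • y) = c * pairR x y := by
    intro x; simp [pairR_expand]; ring
  apply le_antisymm
  · obtain ⟨s, hs, hatt⟩ := ord_attained hS y
    calc ordP _ (c • y) ≤ pairR (toR s) (c • y) := ord_le_gen hS _ hs
    _ = c * pairR (toR s) y := key _
    _ = c * ordP _ y := by rw [hatt]
  · obtain ⟨s, hs, hatt⟩ := ord_attained hS (c • y)
    rw [hatt, key]
    exact mul_le_mul_of_nonneg_left (ord_le_gen hS _ hs) hc

end OrdMin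

end Stmt3Aux
namespace Stmt3Aux

/-- Rational approximation of a strict finite separation. -/
lemma sep_rational (T : Finset Z2) (hT : T.Nonempty) (x : V2)
    (hx : x ∉ convexHull ℝ (toR '' (T : Set Z2))) :
    ∃ n : Z2, n ≠ 0 ∧ ∀ t ∈ T, pairR x (toR n) < pairR (toR t) (toR n) := by
  classical
  have hfin : (toR '' (T : Set Z2)).Finite := T.finite_toSet.image toR
  obtain ⟨f, u, hfx, hfu⟩ :=
    geometric_hahn_banach_point_closed (convex_convexHull ℝ _) (hfin.isClosed_convexHull ℝ) hx
  -- the functional as a vector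
  set c : V2 := fun i => f (Pi.single i 1) with hc
  have hrep : ∀ w : V2, f w = pairR w c := by
    intro w
    have hw : w = w 0 • (Pi.single (0 : Fin 2) (1 : ℝ) : V2) + w 1 • (Pi.single (1 : Fin 2) (1 : ℝ) : V2) := by
      funext i
      fin_cases i <;> simp [Pi.single_apply]
    have hfw : f w = w 0 * c 0 + w 1 * c 1 := by
      conv_lhs => rw [hw]
      rw [map_add, f.map_smul, f.map_smul]
      simp [hc, smul_eq_mul]
    rw [pairR_expand, hfw]
  -- strict gap over generators
  have hgen : ∀ t ∈ T, f x < f (toR t) := by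
    intro t ht
    exact lt_trans hfx (hfu _ (subset_convexHull ℝ _ ⟨t, ht, rfl⟩))
  set δ : ℝ := (T.inf' hT fun t => f (toR t)) - f x with hδ
  have hδpos : 0 < δ := by
    have : f x < T.inf' hT fun t => f (toR t) := by
      rw [Finset.lt_inf'_iff]
      intro t ht; exact hgen t ht
    simpa [hδ] using sub_pos.mpr this
  set W : ℝ := T.sup' hT (fun t => |toR t 0 - x 0| + |toR t 1 - x 1|) with hW
  have hWt : ∀ t ∈ T, |toR t 0 - x 0| + |toR t 1 - x 1| ≤ W :=
    fun t ht => Finset.le_sup' (fun t => |toR t 0 - x 0| + |toR t 1 - x 1|) ht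
  have hWnn : 0 ≤ W := by
    obtain ⟨t, ht⟩ := hT
    exact le_trans (by positivity) (hWt t ht)
  set ε : ℝ := δ / (2 * (W + 1)) with hε
  have hεpos : 0 < ε := by
    apply div_pos hδpos; nlinarith
  obtain ⟨q0, hq0l, hq0r⟩ := exists_rat_btwn (sub_lt_self (c 0) hεpos)
  obtain ⟨q1, hq1l, hq1r⟩ := exists_rat_btwn (sub_lt_self (c 1) hεpos)
  have hq0 : |(q0 : ℝ) - c 0| < ε := by rw [abs_sub_lt_iff]; constructor <;> linarith
  have hq1 : |(q1 : ℝ) - c 1| < ε := by rw [abs_sub_lt_iff]; constructor <;> linarith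
  -- strict separation by the rational vector
  have hqsep : ∀ t ∈ T,
      0 < (toR t 0 - x 0) * (q0 : ℝ) + (toR t 1 - x 1) * (q1 : ℝ) := by
    intro t ht
    have hcs : δ ≤ (toR t 0 - x 0) * c 0 + (toR t 1 - x 1) * c 1 := by
      have h1 : f (toR t) - f x = (toR t 0 - x 0) * c 0 + (toR t 1 - x 1) * c 1 := by
        rw [hrep, hrep, pairR_expand, pairR_expand]; ring
      have h2 : δ ≤ f (toR t) - f x := by
        have := Finset.inf'_le (fun t => f (toR t)) ht
        simp only [hδ]; linarith
      linarith [h1 ▸ h2]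
    have e0 : |(toR t 0 - x 0) * ((q0 : ℝ) - c 0)| ≤ |toR t 0 - x 0| * ε := by
      rw [abs_mul]
      exact mul_le_mul_of_nonneg_left hq0.le (abs_nonneg _)
    have e1 : |(toR t 1 - x 1) * ((q1 : ℝ) - c 1)| ≤ |toR t 1 - x 1| * ε := by
      rw [abs_mul]
      exact mul_le_mul_of_nonneg_left hq1.le (abs_nonneg _)
    have hbound : (|toR t 0 - x 0| + |toR t 1 - x 1|) * ε ≤ W * ε :=
      mul_le_mul_of_nonneg_right (hWt t ht) hεpos.le
    have hWε : W * ε < δ := by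
      have h2W : (0:ℝ) < 2 * (W + 1) := by nlinarith
      have hWe : W * ε = δ * W / (2 * (W + 1)) := by rw [hε]; ring
      rw [hWe, div_lt_iff₀ h2W]
      nlinarith
    have expand : (toR t 0 - x 0) * (q0 : ℝ) + (toR t 1 - x 1) * (q1 : ℝ)
        = ((toR t 0 - x 0) * c 0 + (toR t 1 - x 1) * c 1)
          + ((toR t 0 - x 0) * ((q0:ℝ) - c 0) + (toR t 1 - x 1) * ((q1:ℝ) - c 1)) := by ring
    have habs0 := neg_abs_le ((toR t 0 - x 0) * ((q0 : ℝ) - c 0))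
    have habs1 := neg_abs_le ((toR t 1 - x 1) * ((q1 : ℝ) - c 1))
    rw [expand]
    nlinarith [e0, e1]
  -- clear denominators
  set n : Z2 := fun i => if i = 0 then q0.num * (q1.den : ℤ) else q1.num * (q0.den : ℤ) with hn
  have hden0 : 0 < ((q0.den : ℝ)) := by positivity
  have hden1 : 0 < ((q1.den : ℝ)) := by positivity
  have hnum0 : ((q0.num : ℝ)) = (q0 : ℝ) * (q0.den : ℝ) := by
    rw [Rat.cast_def]; field_simp
  have hnum1 : ((q1.num : ℝ)) = (q1 : ℝ) * (q1.den : ℝ) := by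
    rw [Rat.cast_def]; field_simp
  have hkey : ∀ w : V2, pairR w (toR n)
      = ((q0.den : ℝ) * (q1.den : ℝ)) * (w 0 * (q0 : ℝ) + w 1 * (q1 : ℝ)) := by
    intro w
    rw [pairR_expand]
    simp only [hn, toR]
    push_cast
    rw [hnum0, hnum1]
    ring
  refine ⟨n, ?_, ?_⟩
  · intro h0
    obtain ⟨t, ht⟩ := hT
    have := hqsep t ht
    have hz : pairR (fun i => toR t i - x i) (toR n) = 0 := by
      simp [h0, pairR_expand, toR]
    rw [hkey] at hz
    have : (toR t 0 - x 0) * (q0:ℝ) + (toR t 1 - x 1) * (q1:ℝ) = 0 := by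
      have hdd : ((q0.den : ℝ) * (q1.den : ℝ)) ≠ 0 := by positivity
      have : ((q0.den : ℝ) * (q1.den : ℝ)) * ((toR t 0 - x 0) * (q0:ℝ) + (toR t 1 - x 1) * (q1:ℝ)) = 0 := by
        simpa using hz
      exact (mul_eq_zero.mp this).resolve_left hdd
    linarith [hqsep t ht]
  · intro t ht
    have h := hqsep t ht
    have : 0 < pairR (toR t) (toR n) - pairR x (toR n) := by
      rw [hkey, hkey]
      have hdd : 0 < ((q0.den : ℝ) * (q1.den : ℝ)) := by positivity
      have : (toR t 0 * (q0:ℝ) + toR t 1 * (q1:ℝ)) - (x 0 * (q0:ℝ) + x 1 * (q1:ℝ))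
          = (toR t 0 - x 0) * (q0:ℝ) + (toR t 1 - x 1) * (q1:ℝ) := by ring
      nlinarith
    linarith

/-- The Fine interior is contained in the polytope. -/
lemma fineInterior_subset {S : Finset Z2} (hS : S.Nonempty) :
    fineInterior (convexHull ℝ (toR '' (S : Set Z2))) ⊆ convexHull ℝ (toR '' (S : Set Z2)) := by
  intro x hx
  by_contra hxo
  obtain ⟨n, hn0, hsep⟩ := sep_rational S hS x hxo
  obtain ⟨s, hs, hatt⟩ := ord_attained hS (toR n)
  have h1 := hx n hn0
  have h2 := hsep s hs
  rw [hatt] at h1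
  linarith

lemma fineInterior_convex (Δ : Set V2) : Convex ℝ (fineInterior Δ) := by
  intro p hp q hq a b ha hb hab
  intro n hn
  have hkey : pairR (a • p + b • q) (toR n) = a * pairR p (toR n) + b * pairR q (toR n) := by
    simp [pairR_expand]; ring
  rw [hkey]
  have h1 := mul_le_mul_of_nonneg_left (hp n hn) ha
  have h2 := mul_le_mul_of_nonneg_left (hq n hn) hb
  have hsum : a * (ordP Δ (toR n) + 1) + b * (ordP Δ (toR n) + 1) = ordP Δ (toR n) + 1 := by
    rw [← add_mul, hab, one_mul]
  linarith

lemma fineInterior_closed (Δ : Set V2) : IsClosed (fineInterior Δ) := by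
  have : fineInterior Δ = ⋂ (n : {n : Z2 // n ≠ 0}),
      {x : V2 | ordP Δ (toR n.1) + 1 ≤ pairR x (toR n.1)} := by
    ext x
    simp only [fineInterior, Set.mem_setOf_eq, Set.mem_iInter, Subtype.forall]
  rw [this]
  exact isClosed_iInter fun n =>
    isClosed_le continuous_const (continuous_pairR_left (toR n.1))

end Stmt3Aux
namespace Stmt3Aux

/-- A continuous linear functional on ℝ² is given by pairing with a vector. -/
lemma clm_rep (f : V2 →L[ℝ] ℝ) (w : V2) : f w = pairR w (fun i => f (Pi.single i 1)) := by
  have hw : w = w 0 • (Pi.single (0 : Fin 2) (1 : ℝ) : V2) + w 1 • (Pi.single (1 : Fin 2) (1 : ℝ) : V2) := by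
    funext i
    fin_cases i <;> simp [Pi.single_apply]
  have hfw : f w = w 0 * f (Pi.single 0 1) + w 1 * f (Pi.single 1 1) := by
    conv_lhs => rw [hw]
    rw [map_add, f.map_smul, f.map_smul]
    simp [smul_eq_mul]
  rw [pairR_expand, hfw]

/-- 90 degree rotation of an integer vector. -/
def rotZ (d : Z2) : Z2 := fun i => if i = 0 then -(d 1) else d 0

lemma rotZ_ne_zero {d : Z2} (hd : d ≠ 0) : rotZ d ≠ 0 := by
  intro h
  apply hd
  have h0 := congrFun h 0
  have h1 := congrFun h 1
  simp [rotZ] at h0 h1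
  funext i
  fin_cases i <;> simp [h0, h1]

/-- In 2D, a vector orthogonal to a nonzero integer vector is a multiple of its rotation. -/
lemma perp_2d {c : V2} {d : Z2} (hd : d ≠ 0) (hcd : pairR (toR d) c = 0) (hc : c ≠ 0) :
    ∃ lam : ℝ, lam ≠ 0 ∧ c = lam • toR (rotZ d) := by
  have hcd' : (d 0 : ℝ) * c 0 + (d 1 : ℝ) * c 1 = 0 := by
    have h := hcd; rw [pairR_expand] at h
    simp only [toR] at h; linarith
  by_cases h0 : (d 0 : ℝ) = 0
  · have hd0 : d 0 = 0 := by exact_mod_cast h0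
    have hd1 : (d 1 : ℝ) ≠ 0 := by
      intro h1
      apply hd; funext i
      have hd1' : d 1 = 0 := by exact_mod_cast h1
      fin_cases i <;> simp [hd0, hd1']
    have hc1 : c 1 = 0 := by
      have hz : (d 1 : ℝ) * c 1 = 0 := by rw [h0] at hcd'; linarith
      exact (mul_eq_zero.mp hz).resolve_left hd1
    have hc0 : c 0 ≠ 0 := by
      intro h
      apply hc; funext i; fin_cases i <;> simp [h, hc1]
    refine ⟨-(c 0)/(d 1 : ℝ), by simp [hc0, hd1], ?_⟩
    funext i
    fin_cases i <;> simp [rotZ, toR, smul_eq_mul, hc1, h0] <;> field_simp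
  · have hlam : c 1 / (d 0 : ℝ) ≠ 0 := by
      intro h
      have hc1 : c 1 = 0 := by
        field_simp at h
        simpa using h
      have hc0 : c 0 = 0 := by
        have hz : (d 0 : ℝ) * c 0 = 0 := by rw [hc1] at hcd'; linarith
        exact (mul_eq_zero.mp hz).resolve_left h0
      exact hc (by funext i; fin_cases i <;> simp [hc0, hc1])
    refine ⟨c 1 / (d 0 : ℝ), hlam, ?_⟩
    funext i
    fin_cases i <;> simp [rotZ, toR, smul_eq_mul]
    · field_simp
      nlinarith [hcd']
    · field_simp

lemma pairR_neg_snd (y : V2) (u : Z2) :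
    pairR y (toR (fun i => -(u i))) = -pairR y (toR u) := by
  simp [pairR_expand, toR]; ring

lemma pairR_smul_snd (y : V2) (lam : ℝ) (u : V2) :
    pairR y (lam • u) = lam * pairR y u := by
  simp [pairR_expand]; ring

/-- Final contradiction step: a Fine-interior point cannot minimize an integer functional. -/
lemma ord_contra {S : Finset Z2} (hS : S.Nonempty) {v : V2} {m : Z2}
    (hvFI : v ∈ fineInterior (convexHull ℝ (toR '' (S : Set Z2)))) (hm : m ≠ 0)
    (h : ∀ y ∈ convexHull ℝ (toR '' (S : Set Z2)), pairR v (toR m) ≤ pairR y (toR m))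
    (hvΔ : v ∈ convexHull ℝ (toR '' (S : Set Z2))) : False := by
  have hordv : ordP (convexHull ℝ (toR '' (S : Set Z2))) (toR m) = pairR v (toR m) := by
    apply le_antisymm (ord_le hS _ hvΔ)
    obtain ⟨s, hs, hatt⟩ := ord_attained hS (toR m)
    rw [hatt]
    exact h _ (subset_convexHull ℝ _ ⟨s, hs, rfl⟩)
  have := hvFI m hm
  rw [hordv] at this
  linarith

/-- The Fine interior is contained in the topological interior. -/
lemma fineInterior_subset_interior {S : Finset Z2} (hS : S.Nonempty)
    (h2 : (interior (convexHull ℝ (toR '' (S : Set Z2)))).Nonempty) :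
    fineInterior (convexHull ℝ (toR '' (S : Set Z2)))
      ⊆ interior (convexHull ℝ (toR '' (S : Set Z2))) := by
  classical
  intro v hv
  by_contra hvni
  have hvΔ : v ∈ convexHull ℝ (toR '' (S : Set Z2)) := fineInterior_subset hS hv
  obtain ⟨f, hf⟩ := geometric_hahn_banach_open_point
    ((convex_convexHull ℝ _).interior) isOpen_interior hvni
  obtain ⟨a₀, ha₀⟩ := h2
  have hle : ∀ y ∈ convexHull ℝ (toR '' (S : Set Z2)), f y ≤ f v := by
    intro y hy
    by_contra hgt
    push_neg at hgt
    have key : ∀ t : ℝ, 0 < t → t ≤ 1/2 → t * f a₀ + (1 - t) * f y < f v := by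
      intro t ht ht2
      have hmem : t • a₀ + (1 - t) • y ∈ interior (convexHull ℝ (toR '' (S : Set Z2))) :=
        (convex_convexHull ℝ _).combo_interior_self_mem_interior ha₀ hy ht (by linarith)
          (by ring)
      have := hf _ hmem
      simpa [map_add, _root_.map_smul, smul_eq_mul] using this
    by_cases hya : f y - f a₀ ≤ 0
    · have := key (1/2) (by norm_num) (le_refl _)
      nlinarith
    · push_neg at hya
      set t : ℝ := min (1/2) ((f y - f v)/(2*(f y - f a₀))) with hts
      have htpos : 0 < t := by
        apply lt_min (by norm_num)
        apply div_pos (by linarith) (by linarith)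
      have hkt := key t htpos (min_le_left _ _)
      have hbound : t * (f y - f a₀) ≤ (f y - f v)/2 := by
        calc t * (f y - f a₀) ≤ ((f y - f v)/(2*(f y - f a₀))) * (f y - f a₀) :=
              mul_le_mul_of_nonneg_right (min_le_right _ _) (by linarith)
        _ = (f y - f v)/2 := by field_simp
      nlinarith
  -- representation of v by weights on the generators
  set SF : Finset V2 := S.image toR with hSF
  have hcoe : (SF : Set V2) = toR '' (S : Set Z2) := by rw [hSF, Finset.coe_image]
  have hvMem : v ∈ convexHull ℝ (SF : Set V2) := by rwa [hcoe]
  obtain ⟨w, hw0, hw1, hwsum⟩ := Finset.mem_convexHull'.mp hvMem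
  have hfv : ∑ p ∈ SF, w p * f p = f v := by
    have h := congrArg f hwsum
    rw [map_sum] at h
    simpa [_root_.map_smul, smul_eq_mul] using h
  have hzero : ∑ p ∈ SF, w p * (f v - f p) = 0 := by
    have hexp : ∑ p ∈ SF, w p * (f v - f p)
        = (∑ p ∈ SF, w p) * f v - ∑ p ∈ SF, w p * f p := by
      rw [Finset.sum_mul, ← Finset.sum_sub_distrib]
      congr 1; funext p; ring
    rw [hexp, hw1, hfv, one_mul, sub_self]
  have hsupp : ∀ p ∈ SF, w p ≠ 0 → f p = f v := by
    intro p hp hwp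
    have hterm : ∀ q ∈ SF, 0 ≤ w q * (f v - f q) := by
      intro q hq
      apply mul_nonneg (hw0 q hq)
      have hqΔ : q ∈ convexHull ℝ (toR '' (S : Set Z2)) := by
        apply subset_convexHull
        rw [← hcoe]; exact_mod_cast hq
      linarith [hle q hqΔ]
    have hz := (Finset.sum_eq_zero_iff_of_nonneg hterm).mp hzero p hp
    rcases mul_eq_zero.mp hz with h | h
    · exact absurd h hwp
    · linarith [sub_eq_zero.mp h]
  set SF' : Finset V2 := SF.filter (fun p => f p = f v) with hSF'
  have hw1' : ∑ p ∈ SF', w p = 1 := by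
    rw [← hw1]
    apply Finset.sum_subset (Finset.filter_subset _ _)
    intro p hp hnp
    by_contra hwp
    exact hnp (Finset.mem_filter.mpr ⟨hp, hsupp p hp hwp⟩)
  have hwsum' : ∑ p ∈ SF', w p • p = v := by
    rw [← hwsum]
    apply Finset.sum_subset (Finset.filter_subset _ _)
    intro p hp hnp
    have hwp : w p = 0 := by
      by_contra hwp
      exact hnp (Finset.mem_filter.mpr ⟨hp, hsupp p hp hwp⟩)
    rw [hwp, zero_smul]
  have hSF'ne : SF'.Nonempty := by
    apply Finset.nonempty_iff_ne_empty.mpr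
    intro h
    rw [h, Finset.sum_empty] at hw1'
    norm_num at hw1'
  by_cases hcard : ∃ p ∈ SF', ∃ p' ∈ SF', p ≠ p'
  · -- Case A : the face contains two distinct lattice generators
    obtain ⟨p, hp, p', hp', hpp⟩ := hcard
    have hpSF : p ∈ SF := (Finset.mem_filter.mp hp).1
    have hp'SF : p' ∈ SF := (Finset.mem_filter.mp hp').1
    obtain ⟨z, hz, hzp⟩ := Finset.mem_image.mp hpSF
    obtain ⟨z', hz', hzp'⟩ := Finset.mem_image.mp hp'SF
    set dd : Z2 := fun i => z' i - z i with hdd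
    have hdne : dd ≠ 0 := by
      intro h
      apply hpp
      rw [← hzp, ← hzp']
      have : z = z' := by
        funext i
        have h' := congrFun h i
        simp only [hdd, Pi.zero_apply, sub_eq_zero] at h'
        rw [h']
      rw [this]
    have hcd : pairR (toR dd) (fun i => f (Pi.single i 1)) = 0 := by
      have h1 : f p = f v := (Finset.mem_filter.mp hp).2
      have h2 : f p' = f v := (Finset.mem_filter.mp hp').2
      have h3 : pairR p' (fun i => f (Pi.single i 1)) - pairR p (fun i => f (Pi.single i 1)) = 0 := by
        rw [← clm_rep f p', ← clm_rep f p, h1, h2, sub_self]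
      rw [← hzp, ← hzp'] at h3
      simp only [pairR_expand, toR, hdd] at h3 ⊢
      push_cast
      push_cast at h3
      linarith
    have hcne : (fun i => f (Pi.single i 1)) ≠ (0 : V2) := by
      intro h
      have h1 := hf a₀ ha₀
      have h2 : f a₀ = f v := by
        rw [clm_rep f a₀, clm_rep f v, h]
        simp [pairR_expand]
      linarith
    obtain ⟨lam, hlam, hclam⟩ := perp_2d hdne hcd hcne
    have hfmono : ∀ y ∈ convexHull ℝ (toR '' (S : Set Z2)),
        lam * pairR y (toR (rotZ dd)) ≤ lam * pairR v (toR (rotZ dd)) := by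
      intro y hy
      have hfy := hle y hy
      rw [clm_rep f y, clm_rep f v, hclam] at hfy
      rw [pairR_smul_snd, pairR_smul_snd] at hfy
      exact hfy
    by_cases hl : 0 < lam
    · apply ord_contra hS hv (m := fun i => -(rotZ dd i)) ?_ ?_ hvΔ
      · intro h
        apply rotZ_ne_zero hdne
        funext i
        have := congrFun h i
        simpa [neg_eq_zero] using this
      · intro y hy
        rw [pairR_neg_snd, pairR_neg_snd]
        have := (mul_le_mul_iff_right₀ hl).mp (hfmono y hy)
        linarith
    · have hlneg : lam < 0 := lt_of_le_of_ne (not_lt.mp hl) hlam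
      apply ord_contra hS hv (m := rotZ dd) (rotZ_ne_zero hdne) ?_ hvΔ
      intro y hy
      have h2 : (-lam) * pairR v (toR (rotZ dd)) ≤ (-lam) * pairR y (toR (rotZ dd)) := by
        nlinarith [hfmono y hy]
      exact (mul_le_mul_iff_right₀ (neg_pos.mpr hlneg)).mp h2
  · -- Case B : the face is a single lattice vertex
    push_neg at hcard
    obtain ⟨p, hp⟩ := hSF'ne
    have hvp : v = p := by
      have hsum2 : ∑ q ∈ SF', w q • q = ∑ q ∈ SF', w q • p :=
        Finset.sum_congr rfl (fun q hq => by rw [hcard q hq p hp])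
      rw [hsum2, ← Finset.sum_smul, hw1', one_smul] at hwsum'
      exact hwsum'.symm
    have hpSF : p ∈ SF := (Finset.mem_filter.mp hp).1
    obtain ⟨z, hzS, hzp⟩ := Finset.mem_image.mp hpSF
    by_cases hT' : (S.erase z).Nonempty
    · have hnotin : v ∉ convexHull ℝ (toR '' ((S.erase z) : Set Z2)) := by
        intro hin
        have hstrict : ∀ t ∈ S.erase z, f (toR t) < f v := by
          intro t ht
          have htS := Finset.mem_of_mem_erase ht
          have h1 : f (toR t) ≤ f v := hle _ (subset_convexHull ℝ _ ⟨t, htS, rfl⟩)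
          rcases lt_or_eq_of_le h1 with h | h
          · exact h
          · exfalso
            have hmem : toR t ∈ SF' :=
              Finset.mem_filter.mpr ⟨Finset.mem_image_of_mem toR htS, h⟩
            have heq := hcard _ hmem p hp
            rw [← hzp] at heq
            exact (Finset.mem_erase.mp ht).1 (toR_inj heq)
        set SE : Finset V2 := (S.erase z).image toR with hSE
        have hcoeE : (SE : Set V2) = toR '' ((S.erase z) : Set Z2) := by
          rw [hSE, Finset.coe_image]
        rw [← hcoeE] at hin
        obtain ⟨w', hw'0, hw'1, hw'sum⟩ := Finset.mem_convexHull'.mp hin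
        have hfv' : ∑ q ∈ SE, w' q * f q = f v := by
          have h := congrArg f hw'sum
          rw [map_sum] at h
          simpa [_root_.map_smul, smul_eq_mul] using h
        have hstrictE : ∀ q ∈ SE, f q < f v := by
          intro q hq
          obtain ⟨t, ht, rfl⟩ := Finset.mem_image.mp hq
          exact hstrict t ht
        have hex : ∃ q₀ ∈ SE, w' q₀ ≠ 0 := by
          by_contra hall
          push_neg at hall
          have h0 : ∑ q ∈ SE, w' q = 0 := Finset.sum_eq_zero (fun q hq => hall q hq)
          rw [hw'1] at h0; norm_num at h0
        obtain ⟨q₀, hq₀, hwq₀⟩ := hex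
        have hq0pos : 0 < w' q₀ := lt_of_le_of_ne (hw'0 q₀ hq₀) (Ne.symm hwq₀)
        have hlt : ∑ q ∈ SE, w' q * f q < ∑ q ∈ SE, w' q * f v := by
          apply Finset.sum_lt_sum
          · intro q hq
            exact mul_le_mul_of_nonneg_left (le_of_lt (hstrictE q hq)) (hw'0 q hq)
          · exact ⟨q₀, hq₀, (mul_lt_mul_iff_right₀ hq0pos).mpr (hstrictE q₀ hq₀)⟩
        have hcontra : f v < f v := by
          calc f v = ∑ q ∈ SE, w' q * f q := hfv'.symm
          _ < ∑ q ∈ SE, w' q * f v := hlt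
          _ = f v := by rw [← Finset.sum_mul, hw'1, one_mul]
        exact lt_irrefl _ hcontra
      obtain ⟨n, hn0, hsep⟩ := sep_rational (S.erase z) hT' v hnotin
      have hordn : ordP (convexHull ℝ (toR '' (S : Set Z2))) (toR n) = pairR v (toR n) := by
        apply le_antisymm (ord_le hS _ hvΔ)
        obtain ⟨s, hs, hatt⟩ := ord_attained hS (toR n)
        rw [hatt]
        by_cases hsz : s = z
        · rw [hsz, hvp, ← hzp]
        · exact le_of_lt (hsep s (Finset.mem_erase.mpr ⟨hsz, hs⟩))
      have := hv n hn0
      rw [hordn] at this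
      linarith
    · -- S = {z} : the polytope is a point, contradicting nonempty interior
      have hSz : S = {z} := by
        have he : S.erase z = ∅ := Finset.not_nonempty_iff_eq_empty.mp hT'
        apply Finset.eq_singleton_iff_unique_mem.mpr
        refine ⟨hzS, fun t ht => ?_⟩
        by_contra htz
        exact Finset.notMem_empty t (he ▸ Finset.mem_erase.mpr ⟨htz, ht⟩)
      have hΔsing : convexHull ℝ (toR '' (S : Set Z2)) = {toR z} := by
        rw [hSz]
        simp only [Finset.coe_singleton, Set.image_singleton]
        exact convexHull_singleton _
      have ha₀z : a₀ = toR z := by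
        have h := interior_subset ha₀
        rw [hΔsing] at h
        exact h
      obtain ⟨ε, hε, hball⟩ := Metric.isOpen_iff.mp isOpen_interior a₀ ha₀
      set y : V2 := fun i => a₀ i + ε/2 with hy
      have hyball : y ∈ Metric.ball a₀ ε := by
        rw [Metric.mem_ball, dist_pi_lt_iff hε]
        intro i
        rw [Real.dist_eq]
        have : y i - a₀ i = ε/2 := by simp [hy]
        rw [this, abs_of_pos (by linarith)]
        linarith
      have hyz : y ∈ ({toR z} : Set V2) := by
        rw [← hΔsing]
        exact interior_subset (hball hyball)
      rw [Set.mem_singleton_iff, ← ha₀z] at hyz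
      have hcontr := congrFun hyz 0
      simp only [hy] at hcontr
      linarith

end Stmt3Aux
namespace Stmt3Aux

lemma latticePoint_toR {x : V2} (hx : IsLatticePoint x) : ∃ n : Z2, x = toR n := by
  choose g hg using hx
  exact ⟨g, by funext i; exact hg i⟩

lemma fin_two_cases (i : Fin 2) : i = 0 ∨ i = 1 := by
  rcases i with ⟨iv, hlt⟩
  interval_cases iv
  · left; rfl
  · right; rfl

lemma pairR_self_pos {n : Z2} (hn : n ≠ 0) : 0 < pairR (toR n) (toR n) := by
  rw [pairR_expand]
  have hne : toR n ≠ 0 := fun h => hn (toR_eq_zero_iff.mp h)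
  rcases Function.ne_iff.mp hne with ⟨i, hi⟩
  have hi' : toR n i ≠ 0 := hi
  rcases fin_two_cases i with rfl | rfl
  · nlinarith [mul_self_pos.mpr hi', mul_self_nonneg (toR n 1)]
  · nlinarith [mul_self_pos.mpr hi', mul_self_nonneg (toR n 0)]

/-- An interior lattice point belongs to the Fine interior. -/
lemma interior_lattice_mem_fineInterior {S : Finset Z2} (hS : S.Nonempty)
    {x : V2} (hxi : x ∈ interior (convexHull ℝ (toR '' (S : Set Z2))))
    (hxl : IsLatticePoint x) :
    x ∈ fineInterior (convexHull ℝ (toR '' (S : Set Z2))) := by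
  intro n hn
  obtain ⟨a, rfl⟩ := latticePoint_toR hxl
  obtain ⟨ε, hε, hball⟩ := Metric.isOpen_iff.mp isOpen_interior _ hxi
  set Q : ℝ := pairR (toR n) (toR n) with hQ
  have hQpos : 0 < Q := pairR_self_pos hn
  set B : ℝ := 1 + |toR n 0| + |toR n 1| with hB
  have hBpos : 0 < B := by
    have := abs_nonneg (toR n 0); have := abs_nonneg (toR n 1); rw [hB]; linarith
  set t : ℝ := ε / (2 * B) with ht
  have htpos : 0 < t := by apply div_pos hε; linarith
  set y : V2 := fun i => toR a i - t * toR n i with hy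
  have hyball : y ∈ Metric.ball (toR a) ε := by
    rw [Metric.mem_ball, dist_pi_lt_iff hε]
    intro i
    rw [Real.dist_eq]
    have h1 : y i - toR a i = -(t * toR n i) := by simp [hy]
    rw [h1, abs_neg, abs_mul, abs_of_pos htpos]
    have h2 : |toR n i| ≤ B := by
      rcases fin_two_cases i with rfl | rfl
      · rw [hB]; linarith [abs_nonneg (toR n 1)]
      · rw [hB]; linarith [abs_nonneg (toR n 0)]
    calc t * |toR n i| ≤ t * B := mul_le_mul_of_nonneg_left h2 htpos.le
    _ = ε / 2 := by rw [ht]; field_simp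
    _ < ε := by linarith
  have hyΔ : y ∈ convexHull ℝ (toR '' (S : Set Z2)) := interior_subset (hball hyball)
  have hord : ordP (convexHull ℝ (toR '' (S : Set Z2))) (toR n) ≤ pairR y (toR n) :=
    ord_le hS _ hyΔ
  have hpy : pairR y (toR n) = pairR (toR a) (toR n) - t * Q := by
    rw [hQ, pairR_expand, pairR_expand, pairR_expand]
    simp [hy]; ring
  have hstrict : ordP (convexHull ℝ (toR '' (S : Set Z2))) (toR n) < pairR (toR a) (toR n) := by
    rw [hpy] at hord
    nlinarith
  obtain ⟨k, hk⟩ := ord_int hS n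
  rw [hk, pairR_int] at hstrict
  rw [hk, pairR_int]
  have : k < a 0 * n 0 + a 1 * n 1 := by exact_mod_cast hstrict
  have : k + 1 ≤ a 0 * n 0 + a 1 * n 1 := this
  calc (k : ℝ) + 1 = ((k + 1 : ℤ) : ℝ) := by push_cast; ring
  _ ≤ ((a 0 * n 0 + a 1 * n 1 : ℤ) : ℝ) := by exact_mod_cast this

/-- The set of interior lattice points is finite. -/
lemma interior_lattice_finite (S : Finset Z2) :
    {x ∈ interior (convexHull ℝ (toR '' (S : Set Z2))) | IsLatticePoint x}.Finite := by
  have hcomp : IsCompact (convexHull ℝ (toR '' (S : Set Z2))) :=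
    (S.finite_toSet.image toR).isCompact_convexHull ℝ
  obtain ⟨R, hR⟩ := hcomp.isBounded.subset_closedBall 0
  set K : ℤ := ⌈R⌉ with hK
  apply Set.Finite.subset
    (Set.Finite.image toR (Set.finite_Icc (fun _ : Fin 2 => -K) (fun _ => K)))
  rintro x ⟨hxi, hxl⟩
  obtain ⟨a, rfl⟩ := latticePoint_toR hxl
  refine ⟨a, ?_, rfl⟩
  have hnorm : ‖toR a‖ ≤ R := by
    have := hR (interior_subset hxi)
    simpa [Metric.mem_closedBall, dist_zero_right] using this
  rw [Set.mem_Icc]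
  constructor <;> (rw [Pi.le_def]; intro i)
  · have h1 : |toR a i| ≤ R := le_trans (norm_le_pi_norm (toR a) i) hnorm
    have h2 : -(K : ℝ) ≤ toR a i := by
      have := Int.le_ceil R
      have := abs_le.mp h1
      rw [hK]; push_cast; linarith
    simp only [toR] at h2
    exact_mod_cast h2
  · have h1 : |toR a i| ≤ R := le_trans (norm_le_pi_norm (toR a) i) hnorm
    have h2 : toR a i ≤ (K : ℝ) := by
      have := Int.le_ceil R
      have := abs_le.mp h1
      rw [hK]; push_cast; linarith
    simp only [toR] at h2
    exact_mod_cast h2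

lemma fineInterior_compact {S : Finset Z2} (hS : S.Nonempty) :
    IsCompact (fineInterior (convexHull ℝ (toR '' (S : Set Z2)))) :=
  IsCompact.of_isClosed_subset ((S.finite_toSet.image toR).isCompact_convexHull ℝ)
    (fineInterior_closed _) (fineInterior_subset hS)

end Stmt3Aux
namespace Stmt3Aux

/-- 2x2 integer determinant. -/
def detZ (a b : Z2) : ℤ := a 0 * b 1 - a 1 * b 0

lemma cramer (n₁ n₂ w : Z2) (i : Fin 2) :
    detZ w n₂ * n₁ i + detZ n₁ w * n₂ i = detZ n₁ n₂ * w i := by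
  rcases fin_two_cases i with rfl | rfl <;> (simp only [detZ]; ring)

lemma pairR_rot_eq_det (a b : Z2) :
    pairR (toR (rotZ a)) (toR b) = ((detZ a b : ℤ) : ℝ) := by
  rw [pairR_expand]
  simp only [rotZ, toR, detZ]
  norm_num
  push_cast
  ring

/-- If the determinant is at least 2, some integer vector is outside the span. -/
lemma exists_outside_span {n₁ n₂ : Z2} (hD : 2 ≤ detZ n₁ n₂) :
    ∃ w : Z2, ¬∃ a b : ℤ, ∀ i, w i = a * n₁ i + b * n₂ i := by
  by_contra hall
  push_neg at hall
  obtain ⟨a, b, hab⟩ := hall (fun i => if i = 0 then 1 else 0)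
  obtain ⟨a', b', hab'⟩ := hall (fun i => if i = 0 then 0 else 1)
  have e00 : (1:ℤ) = a * n₁ 0 + b * n₂ 0 := by simpa using hab 0
  have e01 : (0:ℤ) = a * n₁ 1 + b * n₂ 1 := by simpa using hab 1
  have e10 : (0:ℤ) = a' * n₁ 0 + b' * n₂ 0 := by simpa using hab' 0
  have e11 : (1:ℤ) = a' * n₁ 1 + b' * n₂ 1 := by simpa using hab' 1
  have key : (1:ℤ) = (a * n₁ 0 + b * n₂ 0) * (a' * n₁ 1 + b' * n₂ 1)
      - (a * n₁ 1 + b * n₂ 1) * (a' * n₁ 0 + b' * n₂ 0) := by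
    rw [← e00, ← e01, ← e10, ← e11]; norm_num
  have hdvd : detZ n₁ n₂ ∣ 1 := ⟨a * b' - a' * b, by rw [key]; simp only [detZ]; ring⟩
  have := Int.le_of_dvd one_pos hdvd
  omega

end Stmt3Aux
namespace Stmt3Aux

lemma pairR_perturb (x W : V2) (c : ℝ) (y : V2) :
    pairR (fun i => x i + c * W i) y = pairR x y + c * pairR W y := by
  simp [pairR_expand]; ring

lemma abs_pairR_le (W : V2) (n : Z2) :
    |pairR W (toR n)| ≤ (max |W 0| |W 1|) * |toR n 0| + (max |W 0| |W 1|) * |toR n 1| := by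
  rw [pairR_expand]
  calc |W 0 * toR n 0 + W 1 * toR n 1| ≤ |W 0 * toR n 0| + |W 1 * toR n 1| := abs_add_le _ _
  _ = |W 0| * |toR n 0| + |W 1| * |toR n 1| := by rw [abs_mul, abs_mul]
  _ ≤ _ := add_le_add (mul_le_mul_of_nonneg_right (le_max_left _ _) (abs_nonneg _))
        (mul_le_mul_of_nonneg_right (le_max_right _ _) (abs_nonneg _))

lemma one_le_Mx {n : Z2} (hn : n ≠ 0) : 1 ≤ max |toR n 0| |toR n 1| := by
  have hne : toR n ≠ 0 := fun h => hn (toR_eq_zero_iff.mp h)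
  obtain ⟨i, hi⟩ := Function.ne_iff.mp hne
  have hni : n i ≠ 0 := by
    intro h; apply hi; simp [toR, h]
  have h1 : (1:ℝ) ≤ |toR n i| := by
    have h2 : 1 ≤ |n i| := Int.one_le_abs hni
    have h3 : ((1:ℤ):ℝ) ≤ ((|n i| : ℤ) : ℝ) := by exact_mod_cast h2
    calc (1:ℝ) = ((1:ℤ):ℝ) := by norm_num
    _ ≤ ((|n i| : ℤ) : ℝ) := h3
    _ = |toR n i| := by simp [toR]
  rcases fin_two_cases i with rfl | rfl
  · exact le_trans h1 (le_max_left _ _)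
  · exact le_trans h1 (le_max_right _ _)

lemma Mx_sq_le_Q (n : Z2) : (max |toR n 0| |toR n 1|)^2 ≤ pairR (toR n) (toR n) := by
  rw [pairR_expand]
  rcases max_cases |toR n 0| |toR n 1| with ⟨h, _⟩ | ⟨h, _⟩ <;> rw [h] <;>
    nlinarith [sq_abs (toR n 0), sq_abs (toR n 1), sq_nonneg (toR n 0), sq_nonneg (toR n 1)]

lemma Mx_coord_le (n : Z2) (i : Fin 2) : |toR n i| ≤ max |toR n 0| |toR n 1| := by
  rcases fin_two_cases i with rfl | rfl
  exacts [le_max_left _ _, le_max_right _ _]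

/-- Quantitative slack: deep points have slack growing with the norm of the direction. -/
lemma slack_bound {S : Finset Z2} (hS : S.Nonempty) {v : V2} {ε : ℝ} (hε : 0 < ε)
    (hball : Metric.ball v ε ⊆ convexHull ℝ (toR '' (S : Set Z2)))
    {n : Z2} (hn : n ≠ 0) :
    ordP (convexHull ℝ (toR '' (S : Set Z2))) (toR n) + (ε/2) * (max |toR n 0| |toR n 1|)
      ≤ pairR v (toR n) := by
  set s := max |toR n 0| |toR n 1| with hs
  have hs1 : 1 ≤ s := one_le_Mx hn
  set t : ℝ := ε / (2 * s) with ht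
  have htpos : 0 < t := div_pos hε (by linarith)
  set y : V2 := fun i => v i - t * toR n i with hy
  have hyb : y ∈ Metric.ball v ε := by
    rw [Metric.mem_ball, dist_pi_lt_iff hε]
    intro i
    rw [Real.dist_eq]
    have h1 : y i - v i = -(t * toR n i) := by simp [hy]
    rw [h1, abs_neg, abs_mul, abs_of_pos htpos]
    calc t * |toR n i| ≤ t * s := mul_le_mul_of_nonneg_left (Mx_coord_le n i) htpos.le
    _ = ε/2 := by rw [ht]; field_simp
    _ < ε := by linarith
  have h3 := ord_le hS (toR n) (hball hyb)
  have h4 : pairR y (toR n) = pairR v (toR n) - t * pairR (toR n) (toR n) := by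
    simp [pairR_expand, hy]; ring
  have h5 : (ε/2) * s ≤ t * pairR (toR n) (toR n) := by
    have h6 := Mx_sq_le_Q n
    rw [← hs] at h6
    calc (ε/2) * s = t * s^2 := by rw [ht]; field_simp
    _ ≤ t * pairR (toR n) (toR n) := mul_le_mul_of_nonneg_left h6 htpos.le
  rw [h4] at h3
  linarith

end Stmt3Aux
namespace Stmt3Aux

set_option maxHeartbeats 1000000

/-- At an extreme point of the Fine interior there are two independent active
integer directions. -/
lemma exists_indep_active {S : Finset Z2} (hS : S.Nonempty)
    (h2 : (interior (convexHull ℝ (toR '' (S : Set Z2)))).Nonempty)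
    {v : V2} (hv : v ∈ Set.extremePoints ℝ (fineInterior (convexHull ℝ (toR '' (S : Set Z2))))) :
    ∃ n₁ n₂ : Z2,
      (n₁ ≠ 0 ∧ pairR v (toR n₁) = ordP (convexHull ℝ (toR '' (S : Set Z2))) (toR n₁) + 1) ∧
      (n₂ ≠ 0 ∧ pairR v (toR n₂) = ordP (convexHull ℝ (toR '' (S : Set Z2))) (toR n₂) + 1) ∧
      detZ n₁ n₂ ≠ 0 := by
  classical
  have hvFI : v ∈ fineInterior (convexHull ℝ (toR '' (S : Set Z2))) := hv.1
  have hvint : v ∈ interior (convexHull ℝ (toR '' (S : Set Z2))) :=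
    fineInterior_subset_interior hS h2 hvFI
  obtain ⟨ε, hε, hball⟩ := Metric.isOpen_iff.mp isOpen_interior v hvint
  have hballΔ : Metric.ball v ε ⊆ convexHull ℝ (toR '' (S : Set Z2)) :=
    fun y hy => interior_subset (hball hy)
  by_contra hnopair
  push_neg at hnopair
  -- a direction orthogonal to all active constraints
  have hwdir : ∃ wd : Z2, wd ≠ 0 ∧
      ∀ n : Z2, (n ≠ 0 ∧ pairR v (toR n) = ordP (convexHull ℝ (toR '' (S : Set Z2))) (toR n) + 1)
        → pairR (toR wd) (toR n) = 0 := by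
    by_cases hAe : ∃ n₀ : Z2, n₀ ≠ 0 ∧
        pairR v (toR n₀) = ordP (convexHull ℝ (toR '' (S : Set Z2))) (toR n₀) + 1
    · obtain ⟨n₀, hn₀⟩ := hAe
      refine ⟨rotZ n₀, rotZ_ne_zero hn₀.1, fun n hn => ?_⟩
      rw [pairR_rot_eq_det, hnopair n₀ n hn₀ hn]
      simp
    · refine ⟨fun i => if i = 0 then 1 else 0, ?_, fun n hn => absurd ⟨n, hn⟩ hAe⟩
      intro h
      have h0 := congrFun h 0
      simp at h0
  obtain ⟨wd, hwd0, hperp⟩ := hwdir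
  set W : V2 := toR wd with hW
  set MW : ℝ := max |W 0| |W 1| with hMW
  have hMW1 : 1 ≤ MW := one_le_Mx hwd0
  set K : ℤ := ⌈4/ε⌉ with hK
  have hK4 : 4/ε ≤ (K:ℝ) := Int.le_ceil _
  have hKpos : 0 < (K:ℝ) := lt_of_lt_of_le (by positivity) hK4
  have hcpos : (0:ℝ) < 1 + 2*MW*(K:ℝ) := by nlinarith [hMW1, hKpos]
  set box : Finset Z2 := Finset.Icc (fun _ => -K) (fun _ => K) with hbox
  set G : Finset Z2 := box.filter
    (fun n => n ≠ 0 ∧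
      pairR v (toR n) ≠ ordP (convexHull ℝ (toR '' (S : Set Z2))) (toR n) + 1) with hG
  set η₀ : ℝ := if hGn : G.Nonempty then
      G.inf' hGn (fun n => pairR v (toR n)
        - ordP (convexHull ℝ (toR '' (S : Set Z2))) (toR n) - 1)
    else 1 with hη₀
  have hη₀pos : 0 < η₀ := by
    rw [hη₀]
    split_ifs with hGn
    · rw [Finset.lt_inf'_iff]
      intro n hn
      have hn' := Finset.mem_filter.mp hn
      have h1 := hvFI n hn'.2.1
      have h2 := hn'.2.2
      rcases lt_or_eq_of_le h1 with h | h
      · linarith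
      · exact absurd h.symm h2
    · norm_num
  set η : ℝ := min (ε/(8*MW)) (η₀/(1 + 2*MW*(K:ℝ))) with hη
  have hηpos : 0 < η := by
    apply lt_min
    · apply div_pos hε; linarith
    · exact div_pos hη₀pos hcpos
  have hkey : ∀ σ : ℝ, σ = 1 ∨ σ = -1 →
      (fun i => v i + (σ*η) * W i) ∈ fineInterior (convexHull ℝ (toR '' (S : Set Z2))) := by
    intro σ hσ n hn
    rw [pairR_perturb]
    have habsσ : |σ| = 1 := by rcases hσ with rfl | rfl <;> simp
    set Mx : ℝ := max |toR n 0| |toR n 1| with hMx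
    have hMx1 : 1 ≤ Mx := one_le_Mx hn
    have hWbound : |pairR W (toR n)| ≤ 2 * MW * Mx := by
      have h0 := abs_pairR_le W n
      have c0 := Mx_coord_le n 0
      have c1 := Mx_coord_le n 1
      rw [← hMx] at c0 c1
      rw [← hMW] at h0
      have hMW0 : (0:ℝ) ≤ MW := by linarith
      have hb1 := mul_le_mul_of_nonneg_left c0 hMW0
      have hb2 := mul_le_mul_of_nonneg_left c1 hMW0
      linarith
    by_cases hact : pairR v (toR n) = ordP (convexHull ℝ (toR '' (S : Set Z2))) (toR n) + 1
    · rw [hperp n ⟨hn, hact⟩, hact]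
      simp
    · by_cases hbig : 4/ε ≤ Mx
      · have hslack := slack_bound hS hε hballΔ hn
        rw [← hMx] at hslack
        have h1 : 1 ≤ (ε/4) * Mx := by
          have h1' : (ε/4) * (4/ε) ≤ (ε/4) * Mx := mul_le_mul_of_nonneg_left hbig (by positivity)
          calc (1:ℝ) = (ε/4) * (4/ε) := by field_simp
          _ ≤ _ := h1'
        have h2 : |(σ*η) * pairR W (toR n)| ≤ (ε/4) * Mx := by
          rw [abs_mul, abs_mul, habsσ, one_mul, abs_of_pos hηpos]
          have hη1 : η ≤ ε/(8*MW) := min_le_left _ _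
          calc η * |pairR W (toR n)| ≤ (ε/(8*MW)) * (2*MW*Mx) := by
                apply mul_le_mul hη1 hWbound (abs_nonneg _) (by positivity)
          _ = (ε/4) * Mx := by field_simp; ring
        have h3 := neg_abs_le ((σ*η) * pairR W (toR n))
        linarith
      · push_neg at hbig
        have hnbox : n ∈ box := by
          rw [hbox, Finset.mem_Icc]
          constructor <;> (rw [Pi.le_def]; intro i)
          · have hc := Mx_coord_le n i
            rw [← hMx] at hc
            have h4 : |toR n i| < (K:ℝ) := lt_of_le_of_lt hc (lt_of_lt_of_le hbig hK4)
            have h5 := (abs_lt.mp h4).1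
            simp only [toR] at h5
            have h6 : -K < n i := by exact_mod_cast h5
            show -K ≤ n i
            omega
          · have hc := Mx_coord_le n i
            rw [← hMx] at hc
            have h4 : |toR n i| < (K:ℝ) := lt_of_le_of_lt hc (lt_of_lt_of_le hbig hK4)
            have h5 := (abs_lt.mp h4).2
            simp only [toR] at h5
            have h6 : n i < K := by exact_mod_cast h5
            show n i ≤ K
            omega
        have hnG : n ∈ G := Finset.mem_filter.mpr ⟨hnbox, hn, hact⟩
        have hslack : η₀ ≤ pairR v (toR n)
            - ordP (convexHull ℝ (toR '' (S : Set Z2))) (toR n) - 1 := by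
          rw [hη₀]
          split_ifs with hGn
          · exact Finset.inf'_le _ hnG
          · exact absurd ⟨n, hnG⟩ hGn
        have hMxK : Mx ≤ (K:ℝ) := le_trans hbig.le hK4
        have h2 : |(σ*η) * pairR W (toR n)| ≤ η₀ := by
          rw [abs_mul, abs_mul, habsσ, one_mul, abs_of_pos hηpos]
          have hη2 : η ≤ η₀/(1 + 2*MW*(K:ℝ)) := min_le_right _ _
          have hMW0 : (0:ℝ) ≤ 2*MW := by linarith
          have hWK : |pairR W (toR n)| ≤ 2*MW*(K:ℝ) := by
            refine le_trans hWbound ?_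
            rw [mul_assoc, mul_assoc]
            exact mul_le_mul_of_nonneg_left (by nlinarith [hMxK]) (by norm_num)
          calc η * |pairR W (toR n)| ≤ (η₀/(1+2*MW*(K:ℝ))) * (2*MW*(K:ℝ)) := by
                apply mul_le_mul hη2 hWK (abs_nonneg _) (by positivity)
          _ ≤ η₀ := by
                rw [div_mul_eq_mul_div, div_le_iff₀ hcpos]
                nlinarith [hη₀pos.le, mul_nonneg (mul_nonneg (by norm_num : (0:ℝ) ≤ 2) (by linarith : (0:ℝ) ≤ MW)) hKpos.le]
        have h3 := neg_abs_le ((σ*η) * pairR W (toR n))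
        linarith
  have hp1 := hkey 1 (Or.inl rfl)
  have hp2 := hkey (-1) (Or.inr rfl)
  have hseg : v ∈ openSegment ℝ
      (fun i => v i + ((1:ℝ)*η) * W i) (fun i => v i + ((-1:ℝ)*η) * W i) := by
    refine ⟨1/2, 1/2, by norm_num, by norm_num, by norm_num, ?_⟩
    funext i
    simp only [Pi.add_apply, Pi.smul_apply, smul_eq_mul]
    ring
  have hWne : W ≠ 0 := fun h => hwd0 (toR_eq_zero_iff.mp h)
  obtain ⟨j, hj⟩ := Function.ne_iff.mp hWne
  have hfe := congrFun (hv.2 hp1 hp2 hseg) j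
  have hzero : η * W j = 0 := by linarith [hfe]
  rcases mul_eq_zero.mp hzero with h | h
  · linarith
  · exact hj (by simpa using h)

end Stmt3Aux
namespace Stmt3Aux

lemma toR_smul_int (g : ℤ) (m : Z2) : toR (fun i => g * m i) = (g:ℝ) • toR m := by
  funext i; simp [toR]

/-- Active directions are primitive. -/
lemma active_primitive {S : Finset Z2} (hS : S.Nonempty) {v : V2}
    (hvFI : v ∈ fineInterior (convexHull ℝ (toR '' (S : Set Z2))))
    {n : Z2}
    (hact : n ≠ 0 ∧ pairR v (toR n) = ordP (convexHull ℝ (toR '' (S : Set Z2))) (toR n) + 1)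
    {g : ℤ} {m : Z2} (hg : 0 < g) (hnm : ∀ i, n i = g * m i) : g = 1 := by
  have hm0 : m ≠ 0 := by
    rintro rfl
    exact hact.1 (funext fun i => by rw [hnm i]; simp)
  have htoR : toR n = (g:ℝ) • toR m := by
    rw [← toR_smul_int]
    exact congrArg toR (funext hnm)
  have hog : ordP (convexHull ℝ (toR '' (S : Set Z2))) (toR n)
      = (g:ℝ) * ordP (convexHull ℝ (toR '' (S : Set Z2))) (toR m) := by
    rw [htoR, ord_smul hS (by positivity)]
  have hFIm := hvFI m hm0
  have hpairg : pairR v (toR n) = (g:ℝ) * pairR v (toR m) := by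
    rw [htoR, pairR_smul_snd]
  have hg1 : (1:ℝ) ≤ (g:ℝ) := by exact_mod_cast hg
  by_contra hgne
  have hg2 : (2:ℝ) ≤ (g:ℝ) := by exact_mod_cast (by omega : (2:ℤ) ≤ g)
  have hact2 := hact.2
  rw [hpairg, hog] at hact2
  have hmul := mul_le_mul_of_nonneg_left hFIm (by linarith : (0:ℝ) ≤ (g:ℝ))
  nlinarith [hmul]

set_option maxHeartbeats 1600000 in
/-- Extreme points of the Fine interior of a lattice polygon are lattice points. -/
lemma extreme_is_lattice {S : Finset Z2} (hS : S.Nonempty)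
    (h2 : (interior (convexHull ℝ (toR '' (S : Set Z2)))).Nonempty)
    {v : V2} (hv : v ∈ Set.extremePoints ℝ (fineInterior (convexHull ℝ (toR '' (S : Set Z2))))) :
    IsLatticePoint v := by
  classical
  have hvFI : v ∈ fineInterior (convexHull ℝ (toR '' (S : Set Z2))) := hv.1
  obtain ⟨m₁, m₂, hm₁, hm₂, hdm⟩ := exists_indep_active hS h2 hv
  have hPex : ∃ k : ℕ, ∃ p : Z2 × Z2,
      (p.1 ≠ 0 ∧ pairR v (toR p.1) = ordP (convexHull ℝ (toR '' (S : Set Z2))) (toR p.1) + 1) ∧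
      (p.2 ≠ 0 ∧ pairR v (toR p.2) = ordP (convexHull ℝ (toR '' (S : Set Z2))) (toR p.2) + 1) ∧
      detZ p.1 p.2 ≠ 0 ∧ (detZ p.1 p.2).natAbs = k :=
    ⟨(detZ m₁ m₂).natAbs, (m₁, m₂), hm₁, hm₂, hdm, rfl⟩
  set k₀ := Nat.find hPex with hk₀
  obtain ⟨⟨p₁, p₂⟩, hp₁, hp₂, hpd, hpk⟩ := Nat.find_spec hPex
  dsimp only at hp₁ hp₂ hpd hpk
  have hmin : ∀ q₁ q₂ : Z2,
      (q₁ ≠ 0 ∧ pairR v (toR q₁) = ordP (convexHull ℝ (toR '' (S : Set Z2))) (toR q₁) + 1) →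
      (q₂ ≠ 0 ∧ pairR v (toR q₂) = ordP (convexHull ℝ (toR '' (S : Set Z2))) (toR q₂) + 1) →
      detZ q₁ q₂ ≠ 0 → k₀ ≤ (detZ q₁ q₂).natAbs :=
    fun q₁ q₂ h1 h2' h3 => Nat.find_min' hPex ⟨(q₁, q₂), h1, h2', h3, rfl⟩
  obtain ⟨n₁, n₂, hn₁, hn₂, hDpos, hDk⟩ :
      ∃ n₁ n₂ : Z2,
      (n₁ ≠ 0 ∧ pairR v (toR n₁) = ordP (convexHull ℝ (toR '' (S : Set Z2))) (toR n₁) + 1) ∧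
      (n₂ ≠ 0 ∧ pairR v (toR n₂) = ordP (convexHull ℝ (toR '' (S : Set Z2))) (toR n₂) + 1) ∧
      0 < detZ n₁ n₂ ∧ (detZ n₁ n₂).natAbs = k₀ := by
    rcases lt_trichotomy (detZ p₁ p₂) 0 with h | h | h
    · have hsw : detZ p₂ p₁ = -detZ p₁ p₂ := by simp only [detZ]; ring
      exact ⟨p₂, p₁, hp₂, hp₁, by omega, by omega⟩
    · exact absurd h hpd
    · exact ⟨p₁, p₂, hp₁, hp₂, h, hpk⟩
  set D := detZ n₁ n₂ with hD
  have hDne : D ≠ 0 := by omega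
  have hD2false : ¬ (2 ≤ D) := by
    intro hD2
    obtain ⟨w₀, hw₀⟩ := exists_outside_span hD2
    set A := detZ w₀ n₂ with hA
    set Bb := detZ n₁ w₀ with hB
    set a := A % D with ha
    set b := Bb % D with hb
    set z' : Z2 := fun i => w₀ i - (A / D) * n₁ i - (Bb / D) * n₂ i with hz'def
    have hid : ∀ i, a * n₁ i + b * n₂ i = D * z' i := by
      intro i
      have hcr := cramer n₁ n₂ w₀ i
      rw [← hA, ← hB, ← hD] at hcr
      simp only [hz'def, ha, hb, Int.emod_def]
      linear_combination hcr
    have ha0 : 0 ≤ a := Int.emod_nonneg A hDne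
    have haD : a < D := Int.emod_lt_of_pos A (by omega)
    have hb0 : 0 ≤ b := Int.emod_nonneg Bb hDne
    have hbD : b < D := Int.emod_lt_of_pos Bb (by omega)
    -- an active vector cannot be a proper rational multiple of a lattice vector
    have hfactor : ∀ (nn : Z2),
        (nn ≠ 0 ∧ pairR v (toR nn) = ordP (convexHull ℝ (toR '' (S : Set Z2))) (toR nn) + 1) →
        ∀ (c : ℤ) (zz : Z2), 0 < c → c < D → (∀ i, c * nn i = D * zz i) → False := by
      intro nn hnn c zz hc hcD hcid
      set g : ℤ := (Int.gcd D c : ℤ) with hgdef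
      have hgdvdD : g ∣ D := Int.gcd_dvd_left D c
      have hgdvdc : g ∣ c := Int.gcd_dvd_right D c
      have hgpos : 0 < g := by
        have hno : Int.gcd D c ≠ 0 := fun h => hDne (Int.gcd_eq_zero_iff.mp h).1
        have hpos : 0 < Int.gcd D c := Nat.pos_of_ne_zero hno
        rw [hgdef]
        exact_mod_cast hpos
      set D₁ := D / g with hD₁
      set c₁ := c / g with hc₁
      have hDg : g * D₁ = D := Int.mul_ediv_cancel' hgdvdD
      have hcg : g * c₁ = c := Int.mul_ediv_cancel' hgdvdc
      have hcop : Int.gcd D₁ c₁ = 1 := by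
        rw [hD₁, hc₁, hgdef]
        exact Int.gcd_div_gcd_div_gcd (Nat.pos_of_ne_zero (fun h => hDne (Int.gcd_eq_zero_iff.mp h).1))
      have hD₁pos : 0 < D₁ := by nlinarith
      have hc₁pos : 0 < c₁ := by nlinarith
      have hc₁D₁ : c₁ < D₁ := by nlinarith
      have hD₁2 : 2 ≤ D₁ := by omega
      have hdiv : ∀ i, D₁ ∣ nn i := by
        intro i
        have hii : g * (c₁ * nn i) = g * (D₁ * zz i) := by
          rw [← mul_assoc, ← mul_assoc, hcg, hDg]
          exact hcid i
        have hii' : c₁ * nn i = D₁ * zz i := mul_left_cancel₀ (ne_of_gt hgpos) hii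
        have hdd : D₁ ∣ nn i * c₁ := by
          rw [mul_comm, hii']
          exact Dvd.intro (zz i) rfl
        exact Int.dvd_of_dvd_mul_left_of_gcd_one hdd hcop
      have hm : ∀ i, nn i = D₁ * (nn i / D₁) := fun i => (Int.mul_ediv_cancel' (hdiv i)).symm
      have := active_primitive hS hvFI hnn hD₁pos hm
      omega
    have hane : a ≠ 0 := by
      intro ha0'
      by_cases hb0' : b = 0
      · apply hw₀
        refine ⟨A / D, Bb / D, fun i => ?_⟩
        have h := hid i
        rw [ha0', hb0'] at h
        simp only [zero_mul, add_zero] at h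
        have hz0 : z' i = 0 := by
          rcases mul_eq_zero.mp h.symm with h' | h'
          · exact absurd h' hDne
          · exact h'
        simp only [hz'def] at hz0
        linarith [hz0]
      · have hbpos : 0 < b := lt_of_le_of_ne hb0 (Ne.symm hb0')
        apply hfactor n₂ hn₂ b z' hbpos hbD
        intro i
        have h := hid i
        rw [ha0'] at h
        simpa using h
    have hbne : b ≠ 0 := by
      intro hb0'
      have hapos : 0 < a := lt_of_le_of_ne ha0 (Ne.symm hane)
      apply hfactor n₁ hn₁ a z' hapos haD
      intro i
      have h := hid i
      rw [hb0'] at h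
      simpa using h
    have hapos : 0 < a := lt_of_le_of_ne ha0 (Ne.symm hane)
    have hbpos : 0 < b := lt_of_le_of_ne hb0 (Ne.symm hbne)
    -- main descent step
    have hfinal : ∀ (p : Z2) (pa pb : ℤ), 0 < pa → 0 < pb → pa + pb ≤ D →
        (∀ i, pa * n₁ i + pb * n₂ i = D * p i) → False := by
      intro p pa pb hpa hpb hsum hidp
      have hp0 : p ≠ 0 := by
        rintro rfl
        have h0 : ∀ i, pa * n₁ i + pb * n₂ i = 0 := fun i => by simpa using hidp i
        have hdet0 : pa * D = 0 := by
          have e1 : (pa * n₁ 0 + pb * n₂ 0) * n₂ 1 - (pa * n₁ 1 + pb * n₂ 1) * n₂ 0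
              = pa * D := by
            rw [hD]; simp only [detZ]; ring
          rw [h0 0, h0 1] at e1
          simpa using e1.symm
        rcases mul_eq_zero.mp hdet0 with h' | h'
        · omega
        · exact hDne h'
      have hFIp := hvFI p hp0
      have hidR : ∀ i, (D:ℝ) * toR p i = (pa:ℝ) * toR n₁ i + (pb:ℝ) * toR n₂ i := by
        intro i
        simp only [toR]
        exact_mod_cast (hidp i).symm
      have hpairD : (D:ℝ) * pairR v (toR p)
          = (pa:ℝ) * pairR v (toR n₁) + (pb:ℝ) * pairR v (toR n₂) := by
        have r0 := hidR 0
        have r1 := hidR 1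
        simp only [pairR_expand]
        linear_combination v 0 * r0 + v 1 * r1
      have hDR : (0:ℝ) < (D:ℝ) := by exact_mod_cast (by omega : (0:ℤ) < D)
      have hpaR : (0:ℝ) < (pa:ℝ) := by exact_mod_cast hpa
      have hpbR : (0:ℝ) < (pb:ℝ) := by exact_mod_cast hpb
      have hsumR : (pa:ℝ) + (pb:ℝ) ≤ (D:ℝ) := by exact_mod_cast hsum
      have hordD : (pa:ℝ) * ordP (convexHull ℝ (toR '' (S : Set Z2))) (toR n₁)
          + (pb:ℝ) * ordP (convexHull ℝ (toR '' (S : Set Z2))) (toR n₂)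
          ≤ (D:ℝ) * ordP (convexHull ℝ (toR '' (S : Set Z2))) (toR p) := by
        have hsm : (D:ℝ) • toR p = (pa:ℝ) • toR n₁ + (pb:ℝ) • toR n₂ := by
          funext i
          simp only [Pi.add_apply, Pi.smul_apply, smul_eq_mul]
          exact hidR i
        have e1 : ordP (convexHull ℝ (toR '' (S : Set Z2))) ((D:ℝ) • toR p)
            = (D:ℝ) * ordP (convexHull ℝ (toR '' (S : Set Z2))) (toR p) :=
          ord_smul hS hDR.le _
        rw [← e1, hsm]
        calc (pa:ℝ) * ordP (convexHull ℝ (toR '' (S : Set Z2))) (toR n₁)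
            + (pb:ℝ) * ordP (convexHull ℝ (toR '' (S : Set Z2))) (toR n₂)
            = ordP (convexHull ℝ (toR '' (S : Set Z2))) ((pa:ℝ) • toR n₁)
              + ordP (convexHull ℝ (toR '' (S : Set Z2))) ((pb:ℝ) • toR n₂) := by
              rw [ord_smul hS hpaR.le, ord_smul hS hpbR.le]
        _ ≤ _ := ord_superadd hS _ _
      have heq : pairR v (toR p)
          = ordP (convexHull ℝ (toR '' (S : Set Z2))) (toR p) + 1 := by
        have hup : (D:ℝ) * pairR v (toR p)
            ≤ (D:ℝ) * (ordP (convexHull ℝ (toR '' (S : Set Z2))) (toR p) + 1) := by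
          rw [hpairD, hn₁.2, hn₂.2]
          nlinarith [hordD, hsumR, hpaR.le, hpbR.le]
        have hdn : (D:ℝ) * (ordP (convexHull ℝ (toR '' (S : Set Z2))) (toR p) + 1)
            ≤ (D:ℝ) * pairR v (toR p) := mul_le_mul_of_nonneg_left hFIp hDR.le
        exact (mul_left_cancel₀ (ne_of_gt hDR) (le_antisymm hdn hup)).symm ▸ rfl
      have hdet_p : detZ n₁ p = pb := by
        have h1 : D * detZ n₁ p = pb * D := by
          have e : n₁ 0 * (D * p 1) - n₁ 1 * (D * p 0) = D * detZ n₁ p := by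
            simp only [detZ]; ring
          rw [← hidp 0, ← hidp 1] at e
          rw [← e, hD]
          simp only [detZ]
          ring
        have h2 : D * detZ n₁ p = D * pb := by rw [h1]; ring
        exact mul_left_cancel₀ hDne h2
      have hpbD : pb < D := by omega
      have hlt : (detZ n₁ p).natAbs < k₀ := by
        rw [hdet_p, ← hDk]
        omega
      have hdp0 : detZ n₁ p ≠ 0 := by rw [hdet_p]; omega
      have := hmin n₁ p hn₁ ⟨hp0, heq⟩ hdp0
      omega
    by_cases hsum : a + b ≤ D
    · exact hfinal z' a b hapos hbpos hsum hid
    · push_neg at hsum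
      apply hfinal (fun i => n₁ i + n₂ i - z' i) (D - a) (D - b) (by omega) (by omega) (by omega)
      intro i
      have h := hid i
      show (D - a) * n₁ i + (D - b) * n₂ i = D * (n₁ i + n₂ i - z' i)
      linear_combination (-1 : ℤ) * h
  have hD1 : D = 1 := by omega
  -- solve the unimodular linear system
  obtain ⟨k₁, hk₁⟩ := ord_int hS n₁
  obtain ⟨k₂, hk₂⟩ := ord_int hS n₂
  have E1 : v 0 * (n₁ 0 : ℝ) + v 1 * (n₁ 1 : ℝ) = (k₁:ℝ) + 1 := by
    have h := hn₁.2
    rw [pairR_expand, hk₁] at h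
    simp only [toR] at h
    linarith
  have E2 : v 0 * (n₂ 0 : ℝ) + v 1 * (n₂ 1 : ℝ) = (k₂:ℝ) + 1 := by
    have h := hn₂.2
    rw [pairR_expand, hk₂] at h
    simp only [toR] at h
    linarith
  have hdet1 : (n₁ 0 : ℝ) * (n₂ 1 : ℝ) - (n₁ 1 : ℝ) * (n₂ 0 : ℝ) = 1 := by
    have h : detZ n₁ n₂ = 1 := by rw [← hD]; exact hD1
    have h' : ((detZ n₁ n₂ : ℤ) : ℝ) = 1 := by rw [h]; norm_num
    simp only [detZ] at h'
    push_cast at h'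
    linarith
  intro i
  rcases fin_two_cases i with rfl | rfl
  · refine ⟨(k₁ + 1) * n₂ 1 - (k₂ + 1) * n₁ 1, ?_⟩
    push_cast
    linear_combination (n₂ 1 : ℝ) * E1 - (n₁ 1 : ℝ) * E2 - v 0 * hdet1
  · refine ⟨(k₂ + 1) * n₁ 0 - (k₁ + 1) * n₂ 0, ?_⟩
    push_cast
    linear_combination (n₁ 0 : ℝ) * E2 - (n₂ 0 : ℝ) * E1 - v 1 * hdet1

end Stmt3Aux

open Stmt3Aux

/-- the Fine interior of a 2-dimensional lattice polytope equals the
convex hull of its interior lattice points; in particular it is empty when there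
are no interior lattice points. -/
theorem stmt3 (Δ : Set (Fin 2 → ℝ)) (h1 : IsLatticePolytope Δ)
    (h2 : (interior Δ).Nonempty) :
    fineInterior Δ = convexHull ℝ {x ∈ interior Δ | IsLatticePoint x} ∧
      ({x ∈ interior Δ | IsLatticePoint x} = ∅ → fineInterior Δ = ∅) := by
  classical
  obtain ⟨S, rfl⟩ := h1
  have hS : S.Nonempty := by
    rcases Finset.eq_empty_or_nonempty S with rfl | h
    · exfalso
      rw [Finset.coe_empty, Set.image_empty, convexHull_empty, interior_empty] at h2
      exact Set.not_nonempty_empty h2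
    · exact h
  have hmain : fineInterior (convexHull ℝ (toR '' (S : Set Z2)))
      = convexHull ℝ {x ∈ interior (convexHull ℝ (toR '' (S : Set Z2))) | IsLatticePoint x} := by
    apply Set.Subset.antisymm
    · have hKM := closure_convexHull_extremePoints (fineInterior_compact hS)
        (fineInterior_convex (convexHull ℝ (toR '' (S : Set Z2))))
      rw [← hKM]
      have hsub : Set.extremePoints ℝ (fineInterior (convexHull ℝ (toR '' (S : Set Z2))))
          ⊆ {x ∈ interior (convexHull ℝ (toR '' (S : Set Z2))) | IsLatticePoint x} := by
        intro v hv
        exact ⟨fineInterior_subset_interior hS h2 hv.1, extreme_is_lattice hS h2 hv⟩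
      have hcl : IsClosed (convexHull ℝ
          {x ∈ interior (convexHull ℝ (toR '' (S : Set Z2))) | IsLatticePoint x}) :=
        (interior_lattice_finite S).isClosed_convexHull ℝ
      calc closure (convexHull ℝ (Set.extremePoints ℝ
            (fineInterior (convexHull ℝ (toR '' (S : Set Z2))))))
          ⊆ closure (convexHull ℝ
            {x ∈ interior (convexHull ℝ (toR '' (S : Set Z2))) | IsLatticePoint x}) :=
            closure_mono (convexHull_mono hsub)
      _ = convexHull ℝ {x ∈ interior (convexHull ℝ (toR '' (S : Set Z2))) | IsLatticePoint x} :=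
            hcl.closure_eq
    · apply convexHull_min _ (fineInterior_convex _)
      rintro x ⟨hxi, hxl⟩
      exact interior_lattice_mem_fineInterior hS hxi hxl
  refine ⟨hmain, fun hemp => ?_⟩
  rw [hmain, hemp, convexHull_empty]
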